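/- Let d ≥ 2 and n ≥ 1 be integers, let u, v ∈ [0,1]^n, and let ρ(u), ρ(v) be the corresponding qudit-encoded pure-state density matrices. If ‖ρ(u) − ρ(v)‖₁ ≤ c for some c ∈ [0, 2], then ∑_{i=1}^n |u_i − v_i| ≤ (2n/π) · arccos( (1 − c/2)^{1/((d−1)n)} ). -/

import Mathlib

open MeasureTheory Metric Finset
open scoped ComplexOrder

noncomputable section

/-- The positive semidefinite square root of a positive semidefinite matrix
(the definition `Matrix.PosSemidef.sqrt` of the older Mathlib, since removed). -/
def Matrix.PosSemidef.sqrt {n : Type*} [Fintype n] [DecidableEq n] {𝕜 : Type*} [RCLike 𝕜]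
    {A : Matrix n n 𝕜} (hA : A.PosSemidef) : Matrix n n 𝕜 :=
  (hA.1.eigenvectorUnitary : Matrix n n 𝕜) *
    Matrix.diagonal ((↑) ∘ (Real.sqrt ·) ∘ hA.1.eigenvalues) *
    (star hA.1.eigenvectorUnitary : Matrix n n 𝕜)

/-- Trace norm of a complex square matrix: the trace of the positive semidefinite
square root of `Aᴴ * A`. -/
def traceNorm {m : Type*} [Fintype m] [DecidableEq m] (A : Matrix m m ℂ) : ℝ :=
  ((Matrix.posSemidef_conjTranspose_mul_self A).sqrt.trace).re

/-- Qudit encoding of a pixel value `u ∈ [0,1]`: the `j`-th component (0-indexed) is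
`√(binom (d-1) j) · cos^{d-1-j}(πu/2) · sin^j(πu/2)`. -/
def quditVec (d : ℕ) (u : ℝ) : Fin d → ℂ := fun j =>
  (Real.sqrt ((d - 1).choose j) *
    Real.cos (Real.pi * u / 2) ^ (d - 1 - (j : ℕ)) *
    Real.sin (Real.pi * u / 2) ^ (j : ℕ) : ℝ)

/-- Encoded product pure state `|Φ(u)⟩ = φ_d(u_1) ⊗ ⋯ ⊗ φ_d(u_n)`, with `(ℂ^d)^{⊗n}`
realized as functions `(Fin n → Fin d) → ℂ`. -/
def encState (d n : ℕ) (u : Fin n → ℝ) : (Fin n → Fin d) → ℂ := fun f =>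
  ∏ i, quditVec d (u i) (f i)

/-- Density matrix `ρ(u) = |Φ(u)⟩⟨Φ(u)|` of the encoded state. -/
def encRho (d n : ℕ) (u : Fin n → ℝ) :
    Matrix (Fin n → Fin d) (Fin n → Fin d) ℂ := fun a b =>
  encState d n u a * star (encState d n u b)

namespace Stmt3Aux

open Matrix

variable {ι : Type*} [Fintype ι]

lemma vmv_mul (a b c e : ι → ℂ) :
    (vecMulVec a b) * (vecMulVec c e) = (b ⬝ᵥ c) • vecMulVec a e := by
  ext i j
  simp only [mul_apply, vecMulVec_apply, Matrix.smul_apply, smul_eq_mul, dotProduct, Finset.sum_mul]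
  exact Finset.sum_congr rfl fun k _ => by ring

lemma trace_vmv (a b : ι → ℂ) : (vecMulVec a b).trace = a ⬝ᵥ b := by
  simp [Matrix.trace, Matrix.diag, vecMulVec_apply, dotProduct]

lemma Dsq (x y : ι → ℂ) (F : ℂ)
    (hx : star x ⬝ᵥ x = 1) (hy : star y ⬝ᵥ y = 1)
    (hxy : star x ⬝ᵥ y = F) (hyx : star y ⬝ᵥ x = F) :
    (vecMulVec x (star x) - vecMulVec y (star y)) * (vecMulVec x (star x) - vecMulVec y (star y))
      = vecMulVec x (star x) + vecMulVec y (star y)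
        - F • vecMulVec x (star y) - F • vecMulVec y (star x) := by
  simp only [sub_mul, mul_sub, vmv_mul, hx, hy, hxy, hyx, one_smul]
  module

lemma M4 (x y : ι → ℂ) (F : ℂ)
    (hx : star x ⬝ᵥ x = 1) (hy : star y ⬝ᵥ y = 1)
    (hxy : star x ⬝ᵥ y = F) (hyx : star y ⬝ᵥ x = F) :
    (vecMulVec x (star x) + vecMulVec y (star y)
        - F • vecMulVec x (star y) - F • vecMulVec y (star x)) *
    (vecMulVec x (star x) + vecMulVec y (star y)
        - F • vecMulVec x (star y) - F • vecMulVec y (star x))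
      = (1 - F ^ 2) • (vecMulVec x (star x) + vecMulVec y (star y)
        - F • vecMulVec x (star y) - F • vecMulVec y (star x)) := by
  simp only [sub_mul, mul_sub, add_mul, mul_add, smul_mul_assoc, mul_smul_comm,
    vmv_mul, hx, hy, hxy, hyx, smul_smul, one_smul]
  module

lemma traceNorm_eq [DecidableEq ι] (x y : ι → ℂ) (Fr : ℝ) (hF0 : 0 ≤ Fr) (hF1 : Fr < 1)
    (hx : star x ⬝ᵥ x = 1) (hy : star y ⬝ᵥ y = 1)
    (hxy : star x ⬝ᵥ y = (Fr : ℂ)) (hyx : star y ⬝ᵥ x = (Fr : ℂ)) :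
    traceNorm (vecMulVec x (star x) - vecMulVec y (star y))
      = 2 * Real.sqrt (1 - Fr ^ 2) := by
  set A : Matrix ι ι ℂ := vecMulVec x (star x) - vecMulVec y (star y) with hA
  set M : Matrix ι ι ℂ := vecMulVec x (star x) + vecMulVec y (star y)
        - (Fr : ℂ) • vecMulVec x (star y) - (Fr : ℂ) • vecMulVec y (star x) with hMdef
  have t_pos : 0 < 1 - Fr ^ 2 := by nlinarith
  have hst : Real.sqrt (1 - Fr ^ 2) * Real.sqrt (1 - Fr ^ 2) = 1 - Fr ^ 2 :=
    Real.mul_self_sqrt t_pos.le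
  have hstpos : 0 < Real.sqrt (1 - Fr ^ 2) := Real.sqrt_pos.2 t_pos
  have hAH : Aᴴ = A := by
    rw [hA, conjTranspose_sub]
    congr 1 <;> · ext i j; simp [vecMulVec_apply, conjTranspose_apply, mul_comm]
  have hAA : A * A = M := Dsq x y (Fr : ℂ) hx hy hxy hyx
  have hMM : M * M = ((1 - Fr ^ 2 : ℝ) : ℂ) • M := by
    have := M4 x y (Fr : ℂ) hx hy hxy hyx
    rw [hMdef]
    rw [this]
    norm_cast
  set B : Matrix ι ι ℂ := (((Real.sqrt (1 - Fr ^ 2))⁻¹ : ℝ) : ℂ) • M with hBdef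
  have hMpsd : M.PosSemidef := by
    have h := Matrix.posSemidef_conjTranspose_mul_self A
    rwa [hAH, hAA] at h
  have hBpsd : B.PosSemidef := by
    refine .of_dotProduct_mulVec_nonneg ?_ fun z => ?_
    · rw [hBdef, IsHermitian, conjTranspose_smul, hMpsd.1]
      congr 1
      simp [Complex.star_def, Complex.conj_ofReal]
    · rw [hBdef, smul_mulVec, dotProduct_smul]
      have h1 : (0:ℂ) ≤ (((Real.sqrt (1 - Fr ^ 2))⁻¹ : ℝ) : ℂ) := by
        rw [Complex.zero_le_real]
        positivity
      have h2 := hMpsd.dotProduct_mulVec_nonneg z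
      calc (0:ℂ) = (((Real.sqrt (1 - Fr ^ 2))⁻¹ : ℝ) : ℂ) * 0 := by ring
        _ ≤ _ := by
            rw [smul_eq_mul]
            exact mul_le_mul_of_nonneg_left h2 h1
  have hB2 : B ^ 2 = Aᴴ * A := by
    rw [hAH, hAA, pow_two, hBdef, smul_mul_smul_comm, hMM, smul_smul]
    have : (((Real.sqrt (1 - Fr ^ 2))⁻¹ : ℝ) : ℂ) * ((Real.sqrt (1 - Fr ^ 2))⁻¹ : ℝ) *
        ((1 - Fr ^ 2 : ℝ) : ℂ) = 1 := by
      rw [← Complex.ofReal_mul, ← Complex.ofReal_mul]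
      rw [show (Real.sqrt (1 - Fr ^ 2))⁻¹ * (Real.sqrt (1 - Fr ^ 2))⁻¹ * (1 - Fr ^ 2)
          = (1 - Fr ^ 2) / (Real.sqrt (1 - Fr ^ 2) * Real.sqrt (1 - Fr ^ 2)) by ring]
      rw [hst, div_self t_pos.ne']
      simp
    rw [this, one_smul]
  have heq : B = (Matrix.posSemidef_conjTranspose_mul_self A).sqrt :=
    by
      open scoped MatrixOrder in
      have h1 : CFC.sqrt (Aᴴ * A) = B := CFC.sqrt_unique (by rw [← hB2, pow_two]) hBpsd.nonneg
      open scoped MatrixOrder in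
      rw [← h1, CFC.sqrt_eq_cfc, cfc_nnreal_eq_real _ (Aᴴ * A)
        (Matrix.posSemidef_conjTranspose_mul_self A).nonneg,
        (Matrix.posSemidef_conjTranspose_mul_self A).1.cfc_eq]
      simp only [IsHermitian.cfc, Matrix.PosSemidef.sqrt]
      have hmx : ∀ k, max ((Matrix.posSemidef_conjTranspose_mul_self A).1.eigenvalues k) 0
          = (Matrix.posSemidef_conjTranspose_mul_self A).1.eigenvalues k :=
        fun k => max_eq_left ((Matrix.posSemidef_conjTranspose_mul_self A).eigenvalues_nonneg k)
      simp [Real.coe_sqrt, Real.coe_toNNReal', Function.comp_def, hmx]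
  have htr : B.trace = (((Real.sqrt (1 - Fr ^ 2))⁻¹ * (2 - 2 * Fr ^ 2) : ℝ) : ℂ) := by
    rw [hBdef, trace_smul, hMdef, trace_sub, trace_sub, trace_add, trace_smul, trace_smul,
      trace_vmv, trace_vmv, trace_vmv, trace_vmv,
      dotProduct_comm x (star x), dotProduct_comm y (star y),
      dotProduct_comm x (star y), dotProduct_comm y (star x), hx, hy, hxy, hyx]
    push_cast [smul_eq_mul]
    ring
  rw [traceNorm, ← heq, htr]
  rw [Complex.ofReal_re]
  rw [show (2 : ℝ) - 2 * Fr ^ 2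
      = 2 * (Real.sqrt (1 - Fr ^ 2) * Real.sqrt (1 - Fr ^ 2)) by rw [hst]; ring]
  field_simp

lemma quditVec_dot (d : ℕ) (hd : 1 ≤ d) (a b : ℝ) :
    ∑ j : Fin d, quditVec d a j * quditVec d b j
      = ((Real.cos (Real.pi * (a - b) / 2) ^ (d - 1) : ℝ) : ℂ) := by
  have hterm : ∀ j : Fin d, quditVec d a j * quditVec d b j
      = ((((d - 1).choose (j : ℕ) : ℝ) *
          (Real.cos (Real.pi * a / 2) * Real.cos (Real.pi * b / 2)) ^ (d - 1 - (j : ℕ)) *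
          (Real.sin (Real.pi * a / 2) * Real.sin (Real.pi * b / 2)) ^ (j : ℕ) : ℝ) : ℂ) := by
    intro j
    simp only [quditVec]
    rw [← Complex.ofReal_mul]
    congr 1
    rw [show (Real.sqrt ((d - 1).choose (j : ℕ)) * Real.cos (Real.pi * a / 2) ^ (d - 1 - (j : ℕ)) *
          Real.sin (Real.pi * a / 2) ^ (j : ℕ)) *
        (Real.sqrt ((d - 1).choose (j : ℕ)) * Real.cos (Real.pi * b / 2) ^ (d - 1 - (j : ℕ)) *
          Real.sin (Real.pi * b / 2) ^ (j : ℕ))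
        = (Real.sqrt ((d - 1).choose (j : ℕ)) * Real.sqrt ((d - 1).choose (j : ℕ))) *
          ((Real.cos (Real.pi * a / 2) ^ (d - 1 - (j : ℕ)) *
              Real.cos (Real.pi * b / 2) ^ (d - 1 - (j : ℕ))) *
           (Real.sin (Real.pi * a / 2) ^ (j : ℕ) *
              Real.sin (Real.pi * b / 2) ^ (j : ℕ))) from by ring,
      Real.mul_self_sqrt (Nat.cast_nonneg _), ← mul_pow, ← mul_pow]
    ring
  simp only [hterm]
  rw [← Complex.ofReal_sum]
  congr 1
  rw [Fin.sum_univ_eq_sum_range (fun j => (((d - 1).choose j : ℝ) *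
      (Real.cos (Real.pi * a / 2) * Real.cos (Real.pi * b / 2)) ^ (d - 1 - j) *
      (Real.sin (Real.pi * a / 2) * Real.sin (Real.pi * b / 2)) ^ j))]
  have hcos : Real.cos (Real.pi * (a - b) / 2)
      = Real.sin (Real.pi * a / 2) * Real.sin (Real.pi * b / 2)
        + Real.cos (Real.pi * a / 2) * Real.cos (Real.pi * b / 2) := by
    rw [show Real.pi * (a - b) / 2 = Real.pi * a / 2 - Real.pi * b / 2 by ring, Real.cos_sub]
    ring
  rw [hcos, add_pow, show d - 1 + 1 = d from Nat.succ_pred_eq_of_pos hd]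
  exact Finset.sum_congr rfl fun j hj => by ring

lemma star_encState (d n : ℕ) (u : Fin n → ℝ) :
    star (encState d n u) = encState d n u := by
  ext f
  simp only [Pi.star_apply, encState, quditVec, star_prod, Complex.star_def, Complex.conj_ofReal]

lemma encRho_eq (d n : ℕ) (u : Fin n → ℝ) :
    encRho d n u = vecMulVec (encState d n u) (star (encState d n u)) := by
  ext a b
  simp [encRho, vecMulVec_apply]

lemma encState_dot (d n : ℕ) (hd : 1 ≤ d) (u v : Fin n → ℝ) :
    star (encState d n u) ⬝ᵥ encState d n v
      = ((∏ i, Real.cos (Real.pi * (u i - v i) / 2) ^ (d - 1) : ℝ) : ℂ) := by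
  rw [star_encState]
  have : encState d n u ⬝ᵥ encState d n v
      = ∏ i, ∑ j : Fin d, quditVec d (u i) j * quditVec d (v i) j := by
    simp only [dotProduct, encState, ← Finset.prod_mul_distrib]
    rw [Finset.prod_univ_sum, Fintype.piFinset_univ]
  rw [this]
  rw [Complex.ofReal_prod]
  exact Finset.prod_congr rfl fun i _ => quditVec_dot d hd (u i) (v i)

lemma analytic_part (d n : ℕ) (hd : 2 ≤ d) (hn : 1 ≤ n) (x : Fin n → ℝ)
    (hx : ∀ i, |x i| ≤ 1) (r0 : ℝ) (hr0 : 0 ≤ r0)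
    (hF : r0 ≤ ∏ i, Real.cos (Real.pi * x i / 2) ^ (d - 1)) :
    ∑ i, |x i| ≤ (2 * n / Real.pi) * Real.arccos (r0 ^ (1 / (((d : ℝ) - 1) * n) : ℝ)) := by
  have hπ := Real.pi_pos
  have hn0 : (0:ℝ) < n := by exact_mod_cast hn
  set θ : Fin n → ℝ := fun i => Real.pi * |x i| / 2 with hθdef
  have hθ0 : ∀ i, 0 ≤ θ i := fun i => by
    have := abs_nonneg (x i); positivity
  have hθhalf : ∀ i, θ i ≤ Real.pi / 2 := fun i => by
    have h := hx i; have h0 := abs_nonneg (x i)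
    rw [hθdef]; dsimp only; nlinarith
  have hcosθ : ∀ i, Real.cos (θ i) = Real.cos (Real.pi * x i / 2) := fun i => by
    rw [hθdef]; dsimp only
    rw [show Real.pi * |x i| / 2 = |Real.pi * x i / 2| by
      rw [abs_div, abs_mul, abs_of_nonneg hπ.le, abs_two], Real.cos_abs]
  set g : Fin n → ℝ := fun i => Real.cos (Real.pi * x i / 2) with hgdef
  have hg0 : ∀ i, 0 ≤ g i := fun i => by
    rw [hgdef]; dsimp only; rw [← hcosθ]
    exact Real.cos_nonneg_of_mem_Icc ⟨by linarith [hθ0 i], hθhalf i⟩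
  set w : ℝ := (n : ℝ)⁻¹ with hwdef
  have hw0 : 0 ≤ w := by positivity
  have hwsum : ∑ _i : Fin n, w = 1 := by
    rw [Finset.sum_const, Finset.card_univ, Fintype.card_fin, nsmul_eq_mul, hwdef]
    exact mul_inv_cancel₀ hn0.ne'
  set tbar : ℝ := ∑ i, w * θ i with htbardef
  have htbar0 : 0 ≤ tbar := Finset.sum_nonneg fun i _ => mul_nonneg hw0 (hθ0 i)
  have htbarhalf : tbar ≤ Real.pi / 2 := by
    have h1 : ∑ i, θ i ≤ ∑ _i : Fin n, Real.pi / 2 :=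
      Finset.sum_le_sum fun i _ => hθhalf i
    rw [Finset.sum_const, Finset.card_univ, Fintype.card_fin, nsmul_eq_mul] at h1
    rw [htbardef, ← Finset.mul_sum]
    calc w * ∑ i, θ i ≤ w * ((n : ℝ) * (Real.pi / 2)) :=
          mul_le_mul_of_nonneg_left h1 hw0
      _ = Real.pi / 2 := by rw [hwdef]; field_simp
  have hjen : ∑ i, w * Real.cos (θ i) ≤ Real.cos tbar := by
    have h := (strictConcaveOn_cos_Icc.concaveOn).le_map_sum
      (t := Finset.univ) (w := fun _ : Fin n => w) (p := θ)
      (fun i _ => hw0) hwsum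
      (fun i _ => ⟨by linarith [hθ0 i], hθhalf i⟩)
    simpa [smul_eq_mul, htbardef] using h
  have hamgm : ∏ i, (g i) ^ (w : ℝ) ≤ ∑ i, w * g i :=
    Real.geom_mean_le_arith_mean_weighted Finset.univ (fun _ => w) g
      (fun i _ => hw0) hwsum (fun i _ => hg0 i)
  set G : ℝ := ∏ i, g i with hGdef
  have hG0 : 0 ≤ G := Finset.prod_nonneg fun i _ => hg0 i
  have hGrpow : G ^ (w : ℝ) = ∏ i, (g i) ^ (w : ℝ) :=
    (Real.finset_prod_rpow Finset.univ g (fun i _ => hg0 i) w).symm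
  set N : ℝ := (d : ℝ) - 1 with hNdef
  have hN : 0 < N := by
    rw [hNdef]
    have h2 : (2:ℝ) ≤ d := by exact_mod_cast hd
    linarith
  have hF' : r0 ≤ G ^ (d - 1 : ℕ) := by
    rw [hGdef, ← Finset.prod_pow]; exact hF
  have hcastN : ((d - 1 : ℕ) : ℝ) = N := by
    rw [hNdef, Nat.cast_sub (by omega)]; norm_num
  have step1 : r0 ^ (N⁻¹ : ℝ) ≤ G := by
    have h := Real.rpow_le_rpow hr0 hF' (inv_nonneg.2 hN.le)
    rwa [← Real.rpow_natCast G (d - 1), hcastN, ← Real.rpow_mul hG0,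
      mul_inv_cancel₀ hN.ne', Real.rpow_one] at h
  have step2 : r0 ^ (1 / (N * (n : ℝ)) : ℝ) ≤ G ^ (w : ℝ) := by
    have h := Real.rpow_le_rpow (Real.rpow_nonneg hr0 _) step1 hw0
    rwa [← Real.rpow_mul hr0, show (N⁻¹ * w : ℝ) = 1 / (N * (n:ℝ)) by
      rw [hwdef, one_div, mul_inv]] at h
  have hchain : r0 ^ (1 / (N * (n : ℝ)) : ℝ) ≤ Real.cos tbar := by
    calc r0 ^ (1 / (N * (n : ℝ)) : ℝ) ≤ G ^ (w : ℝ) := step2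
      _ ≤ ∑ i, w * g i := hGrpow ▸ hamgm
      _ = ∑ i, w * Real.cos (θ i) := by
          exact Finset.sum_congr rfl fun i _ => by rw [hcosθ]
      _ ≤ Real.cos tbar := hjen
  have harc : tbar ≤ Real.arccos (r0 ^ (1 / (N * (n : ℝ)) : ℝ)) := by
    calc tbar = Real.arccos (Real.cos tbar) :=
          (Real.arccos_cos htbar0 (by linarith)).symm
      _ ≤ _ := by
          rw [Real.arccos, Real.arccos]
          have := Real.monotone_arcsin hchain
          linarith
  have hsum : ∑ i, |x i| = 2 * (n : ℝ) / Real.pi * tbar := by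
    rw [htbardef, Finset.mul_sum]
    refine Finset.sum_congr rfl fun i _ => ?_
    rw [hθdef]; dsimp only
    rw [hwdef]; field_simp
  rw [hsum]
  exact mul_le_mul_of_nonneg_left harc (by positivity)

end Stmt3Aux

/-- translation of a trace-norm bound between qudit-encoded states to
an `ℓ¹` bound between the encoding vectors. -/
theorem stmt3 (d n : ℕ) (hd : 2 ≤ d) (hn : 1 ≤ n)
    (u v : Fin n → ℝ) (hu : ∀ i, u i ∈ Set.Icc (0 : ℝ) 1) (hv : ∀ i, v i ∈ Set.Icc (0 : ℝ) 1)
    (c : ℝ) (hc : c ∈ Set.Icc (0 : ℝ) 2)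
    (hle : traceNorm (encRho d n u - encRho d n v) ≤ c) :
    ∑ i, |u i - v i| ≤ (2 * n / Real.pi) *
      Real.arccos ((1 - c / 2) ^ (1 / (((d : ℝ) - 1) * n) : ℝ)) := by
  have hd1 : 1 ≤ d := by omega
  have hπ := Real.pi_pos
  have hxabs : ∀ i, |u i - v i| ≤ 1 := fun i => by
    have h1 := (hu i).1; have h2 := (hu i).2; have h3 := (hv i).1; have h4 := (hv i).2
    rw [abs_le]; constructor <;> linarith
  set g : Fin n → ℝ := fun i => Real.cos (Real.pi * (u i - v i) / 2) with hgdef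
  have hg0 : ∀ i, 0 ≤ g i := fun i => by
    rw [hgdef]; dsimp only
    apply Real.cos_nonneg_of_mem_Icc
    constructor
    · have := (hxabs i); rw [abs_le] at this; nlinarith [this.1]
    · have := (hxabs i); rw [abs_le] at this; nlinarith [this.2]
  have hg1 : ∀ i, g i ≤ 1 := fun i => Real.cos_le_one _
  set Fr : ℝ := ∏ i, g i ^ (d - 1) with hFrdef
  have hFr0 : 0 ≤ Fr := Finset.prod_nonneg fun i _ => pow_nonneg (hg0 i) _
  have hFr1 : Fr ≤ 1 :=
    Finset.prod_le_one (fun i _ => pow_nonneg (hg0 i) _)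
      (fun i _ => pow_le_one₀ (hg0 i) (hg1 i))
  -- inner products
  have hx : dotProduct (star (encState d n u)) (encState d n u) = 1 := by
    rw [Stmt3Aux.encState_dot d n hd1 u u]
    norm_num
  have hy : dotProduct (star (encState d n v)) (encState d n v) = 1 := by
    rw [Stmt3Aux.encState_dot d n hd1 v v]
    norm_num
  have hxy : dotProduct (star (encState d n u)) (encState d n v) = (Fr : ℂ) := by
    rw [Stmt3Aux.encState_dot d n hd1 u v]
  have hyx : dotProduct (star (encState d n v)) (encState d n u) = (Fr : ℂ) := by
    rw [Stmt3Aux.encState_dot d n hd1 v u]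
    congr 1
    rw [hFrdef]
    refine Finset.prod_congr rfl fun i _ => ?_
    rw [hgdef]
    dsimp only
    rw [show Real.pi * (v i - u i) / 2 = -(Real.pi * (u i - v i) / 2) by ring, Real.cos_neg]
  -- trace norm lower bound gives fidelity bound
  have hFge : 1 - c / 2 ≤ Fr := by
    rcases lt_or_ge Fr 1 with hlt | hge
    · have heq := Stmt3Aux.traceNorm_eq (encState d n u) (encState d n v) Fr hFr0 hlt
        hx hy hxy hyx
      rw [Stmt3Aux.encRho_eq d n u, Stmt3Aux.encRho_eq d n v, heq] at hle
      have h1 : (1 - Fr) ≤ Real.sqrt (1 - Fr ^ 2) := by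
        calc 1 - Fr = Real.sqrt ((1 - Fr) ^ 2) := (Real.sqrt_sq (by linarith)).symm
          _ ≤ Real.sqrt (1 - Fr ^ 2) := Real.sqrt_le_sqrt (by nlinarith)
      linarith
    · linarith [hc.1]
  -- analytic part
  have := Stmt3Aux.analytic_part d n hd hn (fun i => u i - v i) hxabs (1 - c / 2)
    (by linarith [hc.2]) (by simpa [hFrdef, hgdef] using hFge)
  simpa using this
end
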